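/- arXiv:2512.04679 — 2 statements merged into one kernel-verified Lean document; each statement's English description precedes it below -/
import Mathlib

section
/- Let λ, μ, s, c > 0 and 0 < q < 1 with qμ/(1−q) > λ. Then the receiver's utility J_R(s,c) = (qμc(μ+s) + (1−q)λs(λ+c))/((μ+λ)(μc+λs+cs)) satisfies J_R(s,c) ≥ qμ/(μ+λ) if and only if c ≥ qμ/(1−q) − λ. -/
theorem stmt_7 (lam mu s c q : ℝ) (hlam : 0 < lam) (hmu : 0 < mu)
    (hs : 0 < s) (hc : 0 < c) (hq0 : 0 < q) (hq1 : q < 1)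
    (hIC : q * mu / (1 - q) > lam) :
    (q * mu * c * (mu + s) + (1 - q) * lam * s * (lam + c)) /
      ((mu + lam) * (mu * c + lam * s + c * s)) ≥ q * mu / (mu + lam) ↔
    c ≥ q * mu / (1 - q) - lam := by
  have hq' : 0 < 1 - q := by linarith
  have hD : 0 < (mu + lam) * (mu * c + lam * s + c * s) := by positivity
  rw [ge_iff_le, div_le_div_iff₀ (by positivity) hD, ge_iff_le, sub_le_iff_le_add,
    div_le_iff₀ hq']
  constructor <;> intro h <;> nlinarith [mul_pos (mul_pos (add_pos hmu hlam) hs) hlam]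
end

section
/- Let λ, μ > 0, 0 < q < 1 with c_min = qμ/(1−q) − λ > 0, and R > c_min. Then among all pairs (s,c) with s ≥ 0, c ≥ c_min, and s + c ≤ R, the sender's utility J_S(s,c) = λs(c+λ+μ)/((μ+λ)(μc+λs+cs)) is uniquely maximized at s = R − c_min, c = c_min. -/
theorem stmt_9 (lam mu q R : ℝ) (hlam : 0 < lam) (hmu : 0 < mu)
    (hq0 : 0 < q) (hq1 : q < 1)
    (hcmin : 0 < q * mu / (1 - q) - lam)
    (hR : R > q * mu / (1 - q) - lam) :
    let cmin := q * mu / (1 - q) - lam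
    let J : ℝ → ℝ → ℝ := fun s c =>
      lam * s * (c + lam + mu) / ((mu + lam) * (mu * c + lam * s + c * s))
    ∀ s c : ℝ, 0 ≤ s → cmin ≤ c → s + c ≤ R →
      J s c ≤ J (R - cmin) cmin ∧
      (J s c = J (R - cmin) cmin → s = R - cmin ∧ c = cmin) := by
  intro cmin J s c hs hc hsc
  have hc0 : 0 < cmin := hcmin
  have hs0 : 0 < R - cmin := by
    have := hR; dsimp only [cmin]; linarith
  have hcpos : 0 < c := lt_of_lt_of_le hc0 hc
  have hA : 0 < mu + lam := by linarith
  have hsle : s ≤ R - cmin := by linarith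
  have hD : 0 < mu * c + lam * s + c * s := by
    linarith [mul_pos hmu hcpos, mul_nonneg hlam.le hs, mul_nonneg hcpos.le hs]
  have hD0 : 0 < mu * cmin + lam * s + cmin * s := by
    linarith [mul_pos hmu hc0, mul_nonneg hlam.le hs, mul_nonneg hc0.le hs]
  have hDst : 0 < mu * cmin + lam * (R - cmin) + cmin * (R - cmin) := by
    linarith [mul_pos hmu hc0, mul_pos hlam hs0, mul_pos hc0 hs0]
  have key1 : lam * s * (cmin + lam + mu) * ((mu + lam) * (mu * c + lam * s + c * s)) -
      lam * s * (c + lam + mu) * ((mu + lam) * (mu * cmin + lam * s + cmin * s)) =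
      (mu + lam) * lam * s * mu * ((c - cmin) * (lam + mu + s)) := by ring
  have key2 : lam * (R - cmin) * (cmin + lam + mu) *
        ((mu + lam) * (mu * cmin + lam * s + cmin * s)) -
      lam * s * (cmin + lam + mu) *
        ((mu + lam) * (mu * cmin + lam * (R - cmin) + cmin * (R - cmin))) =
      (mu + lam) * lam * (cmin + lam + mu) * (mu * cmin) * (R - cmin - s) := by ring
  have step1 : J s c ≤ J s cmin := by
    show lam * s * (c + lam + mu) / ((mu + lam) * (mu * c + lam * s + c * s)) ≤
      lam * s * (cmin + lam + mu) / ((mu + lam) * (mu * cmin + lam * s + cmin * s))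
    rw [div_le_div_iff₀ (mul_pos hA hD) (mul_pos hA hD0)]
    linarith [mul_nonneg (mul_nonneg (mul_nonneg (mul_nonneg hA.le hlam.le) hs) hmu.le)
      (mul_nonneg (by linarith : (0:ℝ) ≤ c - cmin) (by linarith : (0:ℝ) ≤ lam + mu + s)), key1]
  have step2 : J s cmin ≤ J (R - cmin) cmin := by
    show lam * s * (cmin + lam + mu) / ((mu + lam) * (mu * cmin + lam * s + cmin * s)) ≤
      lam * (R - cmin) * (cmin + lam + mu) /
        ((mu + lam) * (mu * cmin + lam * (R - cmin) + cmin * (R - cmin)))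
    rw [div_le_div_iff₀ (mul_pos hA hD0) (mul_pos hA hDst)]
    linarith [mul_nonneg (mul_nonneg (mul_nonneg (mul_nonneg hA.le hlam.le)
      (by linarith : (0:ℝ) ≤ cmin + lam + mu)) (mul_pos hmu hc0).le)
      (by linarith : (0:ℝ) ≤ R - cmin - s), key2]
  refine ⟨le_trans step1 step2, fun hEq => ?_⟩
  have hJst : 0 < J (R - cmin) cmin := by
    show 0 < lam * (R - cmin) * (cmin + lam + mu) /
      ((mu + lam) * (mu * cmin + lam * (R - cmin) + cmin * (R - cmin)))
    exact div_pos (mul_pos (mul_pos hlam hs0) (by linarith)) (mul_pos hA hDst)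
  rcases eq_or_lt_of_le hs with hs' | hspos
  · exfalso
    have hJ0 : J s c = 0 := by
      show lam * s * (c + lam + mu) / _ = 0
      rw [← hs']; simp
    rw [hJ0] at hEq; linarith
  have hcc : c = cmin := by
    by_contra hne
    have hclt : cmin < c := lt_of_le_of_ne hc (Ne.symm hne)
    have strict1 : J s c < J s cmin := by
      show lam * s * (c + lam + mu) / ((mu + lam) * (mu * c + lam * s + c * s)) <
        lam * s * (cmin + lam + mu) / ((mu + lam) * (mu * cmin + lam * s + cmin * s))
      rw [div_lt_div_iff₀ (mul_pos hA hD) (mul_pos hA hD0)]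
      linarith [mul_pos (mul_pos (mul_pos (mul_pos hA hlam) hspos) hmu)
        (mul_pos (by linarith : (0:ℝ) < c - cmin) (by linarith : (0:ℝ) < lam + mu + s)), key1]
    linarith [lt_of_lt_of_le strict1 step2]
  have hss : s = R - cmin := by
    by_contra hne
    have hslt : s < R - cmin := lt_of_le_of_ne hsle hne
    have strict2 : J s cmin < J (R - cmin) cmin := by
      show lam * s * (cmin + lam + mu) / ((mu + lam) * (mu * cmin + lam * s + cmin * s)) <
        lam * (R - cmin) * (cmin + lam + mu) /
          ((mu + lam) * (mu * cmin + lam * (R - cmin) + cmin * (R - cmin)))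
      rw [div_lt_div_iff₀ (mul_pos hA hD0) (mul_pos hA hDst)]
      linarith [mul_pos (mul_pos (mul_pos (mul_pos hA hlam)
        (by linarith : (0:ℝ) < cmin + lam + mu)) (mul_pos hmu hc0))
        (by linarith : (0:ℝ) < R - cmin - s), key2]
    linarith [lt_of_le_of_lt step1 strict2]
  exact ⟨hss, hcc⟩
end
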